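/- arXiv:2601.18000 — 2 statements merged into one kernel-verified Lean document; each statement's English description precedes it below -/
import Mathlib

section
/- Fix a type-indexed family of equivalence relations on closed simply-typed λ-terms induced by interpretation in finite sets: for a finite set Q, M ∼_Q N iff ⟦M⟧_Q = ⟦N⟧_Q in the standard set-theoretic model with base type interpreted as Q. Then for any two finite sets Q, Q' with |Q'| ≥ |Q|, and any type A and closed terms M, N of type A, ⟦M⟧_{Q'} = ⟦N⟧_{Q'} implies ⟦M⟧_Q = ⟦N⟧_Q. -/
/-- Simple types over a single base type, with unit, products and arrows. -/
inductive Ty : Type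
  | base : Ty
  | unit : Ty
  | prod : Ty → Ty → Ty
  | arrow : Ty → Ty → Ty

/-- Standard set-theoretic interpretation of simple types with base type interpreted as `Q`. -/
def Ty.interp (Q : Type) : Ty → Type
  | .base => Q
  | .unit => Unit
  | .prod A B => A.interp Q × B.interp Q
  | .arrow A B => A.interp Q → B.interp Q

/-- De Bruijn variables. -/
inductive Var : List Ty → Ty → Type
  | vz {Γ A} : Var (A :: Γ) A
  | vs {Γ A B} : Var Γ A → Var (B :: Γ) A

/-- Intrinsically typed terms of the simply typed λ-calculus with unit and products. -/
inductive Tm : List Ty → Ty → Type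
  | var {Γ A} : Var Γ A → Tm Γ A
  | lam {Γ A B} : Tm (A :: Γ) B → Tm Γ (.arrow A B)
  | app {Γ A B} : Tm Γ (.arrow A B) → Tm Γ A → Tm Γ B
  | pair {Γ A B} : Tm Γ A → Tm Γ B → Tm Γ (.prod A B)
  | fst {Γ A B} : Tm Γ (.prod A B) → Tm Γ A
  | snd {Γ A B} : Tm Γ (.prod A B) → Tm Γ B
  | star {Γ} : Tm Γ .unit

/-- Semantic environments. -/
def Env (Q : Type) : List Ty → Type
  | [] => Unit
  | A :: Γ => Ty.interp Q A × Env Q Γ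

def Var.eval {Q : Type} : ∀ {Γ A}, Var Γ A → Env Q Γ → Ty.interp Q A
  | _, _, .vz, env => env.1
  | _, _, .vs v, env => v.eval env.2

/-- Denotation of a term in the standard model over `Q`. -/
def Tm.eval {Q : Type} : ∀ {Γ A}, Tm Γ A → Env Q Γ → Ty.interp Q A
  | _, _, .var v, env => v.eval env
  | _, _, .lam t, env => fun x => t.eval (x, env)
  | _, _, .app t u, env => t.eval env (u.eval env)
  | _, _, .pair t u, env => (t.eval env, u.eval env)
  | _, _, .fst t, env => (t.eval env).1
  | _, _, .snd t, env => (t.eval env).2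
  | _, _, .star, _ => ()

/-- If the base type is a subsingleton, every type's interpretation is a subsingleton. -/
lemma interp_subsingleton (Q : Type) [Subsingleton Q] : ∀ A : Ty, Subsingleton (Ty.interp Q A)
  | .base => inferInstanceAs (Subsingleton Q)
  | .unit => inferInstanceAs (Subsingleton Unit)
  | .prod A B =>
    have := interp_subsingleton Q A; have := interp_subsingleton Q B
    inferInstanceAs (Subsingleton (_ × _))
  | .arrow A B =>
    have := interp_subsingleton Q B
    inferInstanceAs (Subsingleton (_ → _))

lemma interp_nonempty (Q : Type) [Nonempty Q] : ∀ A : Ty, Nonempty (Ty.interp Q A)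
  | .base => inferInstanceAs (Nonempty Q)
  | .unit => ⟨()⟩
  | .prod A B => (interp_nonempty Q A).elim fun a => (interp_nonempty Q B).elim fun b => ⟨(a, b)⟩
  | .arrow A B => (interp_nonempty Q B).elim fun b => ⟨fun _ => b⟩

section LogRel

variable {Q Q' : Type} (s : Q' → Q) (i : Q → Q')

/-- The logical relation between the `Q`-model and the `Q'`-model, induced by `s : Q' → Q`. -/
def LamRel : ∀ A : Ty, Ty.interp Q A → Ty.interp Q' A → Prop
  | .base, x, y => x = s y
  | .unit, _, _ => True
  | .prod A B, x, y => LamRel A x.1 y.1 ∧ LamRel B x.2 y.2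
  | .arrow A B, f, g => ∀ x y, LamRel A x y → LamRel B (f x) (g y)

/-- The relation is left-unique and right-total, given a section `i` of `s`. -/
lemma rel_lu_rt [Nonempty Q'] (hs : ∀ x, s (i x) = x) :
    ∀ A : Ty, (∀ x x' y, LamRel s A x y → LamRel s A x' y → x = x') ∧ (∀ x, ∃ y, LamRel s A x y)
  | .base => ⟨fun x x' y hx hx' => hx.trans hx'.symm, fun x => ⟨i x, (hs x).symm⟩⟩
  | .unit => ⟨fun x x' _ _ _ => rfl, fun _ => ⟨(), trivial⟩⟩
  | .prod A B => by
    obtain ⟨luA, rtA⟩ := rel_lu_rt hs A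
    obtain ⟨luB, rtB⟩ := rel_lu_rt hs B
    refine ⟨fun x x' y hx hx' => Prod.ext (luA _ _ _ hx.1 hx'.1) (luB _ _ _ hx.2 hx'.2),
      fun x => ?_⟩
    obtain ⟨y1, h1⟩ := rtA x.1
    obtain ⟨y2, h2⟩ := rtB x.2
    exact ⟨(y1, y2), h1, h2⟩
  | .arrow A B => by
    obtain ⟨luA, rtA⟩ := rel_lu_rt hs A
    obtain ⟨luB, rtB⟩ := rel_lu_rt hs B
    constructor
    · intro f f' g hf hf'
      funext x
      obtain ⟨y, hy⟩ := rtA x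
      exact luB _ _ _ (hf x y hy) (hf' x y hy)
    · intro f
      classical
      refine ⟨fun y =>
        if h : ∃ x, LamRel s A x y then Classical.choose (rtB (f (Classical.choose h)))
        else Classical.choice (interp_nonempty Q' B), ?_⟩
      intro x y hxy
      have h : ∃ x, LamRel s A x y := ⟨x, hxy⟩
      simp only [dif_pos h]
      have hx : x = Classical.choose h := luA _ _ _ hxy (Classical.choose_spec h)
      rw [hx]
      exact Classical.choose_spec (rtB (f (Classical.choose h)))

/-- The logical relation on environments. -/
def EnvLamRel : ∀ Γ : List Ty, Env Q Γ → Env Q' Γ → Prop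
  | [], _, _ => True
  | A :: Γ, e, e' => LamRel s A e.1 e'.1 ∧ EnvLamRel Γ e.2 e'.2

lemma var_fund : ∀ {Γ A} (v : Var Γ A) (e : Env Q Γ) (e' : Env Q' Γ),
    EnvLamRel s Γ e e' → LamRel s A (v.eval e) (v.eval e')
  | _, _, .vz, _, _, he => he.1
  | _, _, .vs v, _, _, he => var_fund v _ _ he.2

/-- Fundamental lemma of the logical relation. -/
lemma tm_fund : ∀ {Γ A} (t : Tm Γ A) (e : Env Q Γ) (e' : Env Q' Γ),
    EnvLamRel s Γ e e' → LamRel s A (t.eval e) (t.eval e')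
  | _, _, .var v, _, _, he => var_fund s v _ _ he
  | _, _, .lam t, e, e', he => fun x y hxy => tm_fund t (x, e) (y, e') ⟨hxy, he⟩
  | _, _, .app t u, e, e', he => tm_fund t e e' he _ _ (tm_fund u e e' he)
  | _, _, .pair t u, e, e', he => ⟨tm_fund t e e' he, tm_fund u e e' he⟩
  | _, _, .fst t, e, e', he => (tm_fund t e e' he).1
  | _, _, .snd t, e, e', he => (tm_fund t e e' he).2
  | _, _, .star, _, _, _ => trivial

end LogRel

/-- If two closed terms have the same denotation over a finite set `Q'`, then they have the
same denotation over any finite set `Q` with `|Q| ≤ |Q'|`. -/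
theorem eval_eq_of_eval_eq_of_card_le (Q Q' : Type) [Fintype Q] [Fintype Q']
    (hcard : Fintype.card Q ≤ Fintype.card Q') (A : Ty) (M N : Tm [] A)
    (h : M.eval (Q := Q') () = N.eval (Q := Q') ()) :
    M.eval (Q := Q) () = N.eval (Q := Q) () := by
  rcases isEmpty_or_nonempty Q with hQ | hQ
  · have := interp_subsingleton Q A
    exact Subsingleton.elim _ _
  · obtain ⟨i⟩ : Nonempty (Q ↪ Q') := Function.Embedding.nonempty_iff_card_le.mpr hcard
    have : Nonempty Q' := ⟨i (Classical.arbitrary Q)⟩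
    set s : Q' → Q := Function.invFun i with hs_def
    have hs : ∀ x, s (i x) = x := Function.leftInverse_invFun i.injective
    obtain ⟨lu, _⟩ := rel_lu_rt s i hs A
    have hM := tm_fund s M () () trivial
    have hN := tm_fund s N () () trivial
    rw [h] at hM
    exact lu _ _ _ hM hN
end

section
/- Let X and Y be Stone spaces and π : X × Y → X the projection. Define, for clopen W ⊆ X × Y, π_∀(W) = {x ∈ X | ∀ y ∈ Y, (x,y) ∈ W}. Then π_∀(W) is clopen, and π_∀ is right adjoint to the preimage map π⁻¹ on the posets of clopen sets: for clopens U ⊆ X and W ⊆ X × Y, π⁻¹(U) ⊆ W if and only if U ⊆ π_∀(W). -/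
/-- Universal quantification along the projection `X × Y → X` between Stone spaces:
`π_∀(W)` is clopen, and it is right adjoint to the preimage map on clopen sets. -/
theorem pi_forall_clopen_and_adjoint {X Y : Type*}
    [TopologicalSpace X] [CompactSpace X] [T2Space X] [TotallyDisconnectedSpace X]
    [TopologicalSpace Y] [CompactSpace Y] [T2Space Y] [TotallyDisconnectedSpace Y]
    (W : Set (X × Y)) (hW : IsClopen W) :
    IsClopen {x : X | ∀ y : Y, (x, y) ∈ W} ∧
      ∀ U : Set X, IsClopen U →
        ((Prod.fst ⁻¹' U ⊆ W) ↔ U ⊆ {x : X | ∀ y : Y, (x, y) ∈ W}) := by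
  have key : {x : X | ∀ y : Y, (x, y) ∈ W} = (Prod.fst '' Wᶜ)ᶜ := by
    ext x
    simp only [Set.mem_setOf_eq, Set.mem_compl_iff, Set.mem_image, Prod.exists]
    constructor
    · rintro h ⟨a, b, hab, rfl⟩
      exact hab (h b)
    · intro h y
      by_contra hy
      exact h ⟨x, y, hy, rfl⟩
  constructor
  · rw [key]
    constructor
    · -- (π(Wᶜ))ᶜ closed: π(Wᶜ) open since π open and Wᶜ open
      exact (isOpenMap_fst _ hW.compl.isOpen).isClosed_compl
    · -- (π(Wᶜ))ᶜ open: π(Wᶜ) closed since π closed map (Y compact) and Wᶜ closed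
      exact (isClosedMap_fst_of_compactSpace _ hW.compl.isClosed).isOpen_compl
  · intro U _
    constructor
    · intro h x hx y
      exact h (show (x, y).1 ∈ U from hx)
    · rintro h ⟨x, y⟩ hx
      exact h hx y
end
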